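/- For every subset S ⊆ {1,…,n} with |S| = n − k, the maximal minors of G(X) agree with those of X up to a fixed monomial factor in cyclically-consecutive Plücker coordinates: Δ_S(G(X)) = ( ∏_{i=1}^{n−k−1} Δ_{[i+k+1, n+i]}(X) ) · Δ_S(X). (This is the special case I = [1, n−k] of Lemma 9.2; it is the proportionality G*∘F*(Δ_S) ≍ Δ_S used in the proof of Theorem 9.1, generalizing equation (3.1) from the case (k,n) = (2,5).) -/

import Mathlib

open scoped BigOperators

/-- The column index (0-based, in `Fin n`) corresponding to the residue in `{1,…,n}` of
the integer `a` modulo `n`. -/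
def colIdx (n : ℕ) [NeZero n] (a : ℤ) : Fin n :=
  ⟨((a - 1) % (n : ℤ)).toNat, by
    have hn : 0 < n := Nat.pos_of_ne_zero (NeZero.ne n)
    have h1 : 0 ≤ (a - 1) % (n : ℤ) := Int.emod_nonneg _ (by exact_mod_cast hn.ne')
    have h2 : (a - 1) % (n : ℤ) < (n : ℤ) := Int.emod_lt_of_pos _ (by exact_mod_cast hn)
    omega⟩

/-- The Plücker coordinate `Δ_S(X)` of an `(n−k)×n` matrix `X`, for a finite set `S` of
integers: reduce the entries of `S` modulo `n` to residues in `{1,…,n}`; if fewer than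
`n−k` distinct residues result, the value is `0`; otherwise it is the determinant of the
`(n−k)×(n−k)` submatrix of `X` on the corresponding columns, taken in increasing order. -/
def pluecker {R : Type*} [CommRing R] (k n : ℕ) [NeZero n]
    (X : Matrix (Fin (n - k)) (Fin n) R) (S : Finset ℤ) : R :=
  if h : (S.image (colIdx n)).card = n - k then
    (X.submatrix id (⇑((S.image (colIdx n)).orderEmbOfFin h))).det
  else 0

/-- The band matrix `G(X)`, with `G(X)_{i,j} = Δ_{[i+k+1, n+i−1] ∪ {j}}(X)` (indices
`1`-based). -/
noncomputable def Gmat {R : Type*} [CommRing R] (k n : ℕ) [NeZero n]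
    (X : Matrix (Fin (n - k)) (Fin n) R) : Matrix (Fin (n - k)) (Fin n) R :=
  Matrix.of fun i j =>
    pluecker k n X
      (Finset.Icc (((i : ℕ) : ℤ) + 1 + k + 1) ((n : ℤ) + (((i : ℕ) : ℤ) + 1) - 1) ∪
        {((j : ℕ) : ℤ) + 1})

namespace GmatAux

lemma colIdx_val (n : ℕ) [NeZero n] (a : ℤ) (h1 : 1 ≤ a) (h2 : a ≤ (n : ℤ)) :
    ((colIdx n a : Fin n) : ℕ) = (a - 1).toNat := by
  simp only [colIdx]
  rw [Int.emod_eq_of_lt (by omega) (by omega)]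

lemma colIdx_add_n (n : ℕ) [NeZero n] (a : ℤ) : colIdx n ((n : ℤ) + a) = colIdx n a := by
  apply Fin.ext
  simp only [colIdx]
  rw [show (n : ℤ) + a - 1 = (a - 1) + (n : ℤ) by ring, Int.add_emod_right]

/-- the cyclic interval of `n-k-1` columns attached to row `i`. -/
noncomputable def Tset (k n : ℕ) (i : Fin (n - k)) : Finset ℤ :=
  Finset.Icc (((i : ℕ) : ℤ) + 1 + k + 1) ((n : ℤ) + (((i : ℕ) : ℤ) + 1) - 1)

lemma Gmat_apply {R : Type*} [CommRing R] (k n : ℕ) [NeZero n]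
    (X : Matrix (Fin (n - k)) (Fin n) R) (i : Fin (n - k)) (j : Fin n) :
    Gmat k n X i j = pluecker k n X (Tset k n i ∪ {((j : ℕ) : ℤ) + 1}) := rfl

/-- sorted columns of `Tset k n i`, 0-based. -/
def sigmaCol (k n : ℕ) (i : Fin (n - k)) : Fin (n - k - 1) → Fin n :=
  fun t => if (t : ℕ) < (i : ℕ) then ⟨t, by have := t.isLt; omega⟩
    else ⟨(t : ℕ) + k + 1, by have := t.isLt; omega⟩

/-- sorted columns of `Tset k n i ∪ {j+1}` when `j` is in the band. -/
def gCol (k n : ℕ) (i : Fin (n - k)) (j : Fin n) : Fin (n - k) → Fin n :=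
  fun t => if (t : ℕ) < (i : ℕ) then ⟨t, by have := t.isLt; omega⟩
    else if (t : ℕ) = (i : ℕ) then j else ⟨(t : ℕ) + k, by have := t.isLt; omega⟩

/-- delete row `r`. -/
def rowDel (k n : ℕ) (r : Fin (n - k)) : Fin (n - k - 1) → Fin (n - k) :=
  fun t => if (t : ℕ) < (r : ℕ) then ⟨t, by have := t.isLt; omega⟩
    else ⟨(t : ℕ) + 1, by have := t.isLt; omega⟩


lemma sigmaCol_val (k n : ℕ) (i : Fin (n - k)) (t : Fin (n - k - 1)) :
    (sigmaCol k n i t : ℕ)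
      = if (t : ℕ) < (i : ℕ) then (t : ℕ) else (t : ℕ) + k + 1 := by
  simp only [sigmaCol]; split_ifs <;> rfl

lemma gCol_val (k n : ℕ) (i : Fin (n - k)) (j : Fin n) (t : Fin (n - k)) :
    (gCol k n i j t : ℕ)
      = if (t : ℕ) < (i : ℕ) then (t : ℕ)
        else if (t : ℕ) = (i : ℕ) then (j : ℕ) else (t : ℕ) + k := by
  simp only [gCol]; split_ifs <;> rfl

lemma rowDel_val (k n : ℕ) (r : Fin (n - k)) (t : Fin (n - k - 1)) :
    (rowDel k n r t : ℕ) = if (t : ℕ) < (r : ℕ) then (t : ℕ) else (t : ℕ) + 1 := by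
  simp only [rowDel]; split_ifs <;> rfl

/-- the cofactor matrix `C` with `G(X) = C · X`. -/
def Cmat {R : Type*} [CommRing R] (k n : ℕ) [NeZero n]
    (X : Matrix (Fin (n - k)) (Fin n) R) : Matrix (Fin (n - k)) (Fin (n - k)) R :=
  Matrix.of fun i r =>
    (-1) ^ ((i : ℕ) + (r : ℕ)) * (X.submatrix (rowDel k n r) (sigmaCol k n i)).det

lemma mem_image_Tset (k n : ℕ) [NeZero n] (hkn : k < n) (i : Fin (n - k)) (x : Fin n) :
    x ∈ (Tset k n i).image (colIdx n) ↔ (x : ℕ) < (i : ℕ) ∨ (i : ℕ) + k < (x : ℕ) := by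
  have hi := i.isLt
  have hx := x.isLt
  constructor
  · intro hx'
    obtain ⟨a, ha, rfl⟩ := Finset.mem_image.1 hx'
    rw [Tset, Finset.mem_Icc] at ha
    by_cases hc : a ≤ (n : ℤ)
    · right
      have := colIdx_val n a (by omega) hc
      omega
    · left
      have h2 : colIdx n a = colIdx n (a - n) := by
        rw [show a = (n : ℤ) + (a - n) by ring] ; rw [colIdx_add_n]; ring_nf
      rw [h2]
      have := colIdx_val n (a - n) (by omega) (by omega)
      omega
  · rintro (h | h)
    · refine Finset.mem_image.2 ⟨(n : ℤ) + (((x : ℕ) : ℤ) + 1), ?_, ?_⟩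
      · rw [Tset, Finset.mem_Icc]; constructor <;> push_cast <;> omega
      · rw [colIdx_add_n]
        apply Fin.ext
        rw [colIdx_val n _ (by omega) (by exact_mod_cast Nat.succ_le_of_lt hx)]
        omega
    · refine Finset.mem_image.2 ⟨((x : ℕ) : ℤ) + 1, ?_, ?_⟩
      · rw [Tset, Finset.mem_Icc]; constructor <;> push_cast <;> omega
      · apply Fin.ext
        rw [colIdx_val n _ (by omega) (by exact_mod_cast Nat.succ_le_of_lt hx)]
        omega

lemma sigmaCol_strictMono (k n : ℕ) (i : Fin (n - k)) : StrictMono (sigmaCol k n i) := by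
  intro s t hst
  have hs := s.isLt
  have ht := t.isLt
  rw [Fin.lt_def] at hst ⊢
  simp only [sigmaCol_val]
  split_ifs <;> omega

lemma image_Tset_eq (k n : ℕ) [NeZero n] (hkn : k < n) (i : Fin (n - k)) :
    (Tset k n i).image (colIdx n) = Finset.image (sigmaCol k n i) Finset.univ := by
  ext x
  rw [mem_image_Tset k n hkn]
  constructor
  · rintro (h | h)
    · refine Finset.mem_image.2 ⟨⟨(x : ℕ), by have := i.isLt; omega⟩, Finset.mem_univ _, ?_⟩
      apply Fin.ext
      rw [sigmaCol_val]
      simp only [Fin.val_mk]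
      rw [if_pos h]
    · refine Finset.mem_image.2 ⟨⟨(x : ℕ) - k - 1, by have := x.isLt; omega⟩, Finset.mem_univ _, ?_⟩
      apply Fin.ext
      rw [sigmaCol_val]
      simp only [Fin.val_mk]
      have := x.isLt
      rw [if_neg (by omega)]
      omega
  · rintro hx
    obtain ⟨t, _, rfl⟩ := Finset.mem_image.1 hx
    have := t.isLt
    rw [sigmaCol_val]
    split_ifs with h <;> omega

lemma card_image_Tset (k n : ℕ) [NeZero n] (hkn : k < n) (i : Fin (n - k)) :
    ((Tset k n i).image (colIdx n)).card = n - k - 1 := by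
  rw [image_Tset_eq k n hkn,
    Finset.card_image_of_injective _ (sigmaCol_strictMono k n i).injective]
  simp

lemma colIdx_fin (n : ℕ) [NeZero n] (j : Fin n) : colIdx n (((j : ℕ) : ℤ) + 1) = j := by
  apply Fin.ext
  rw [colIdx_val n _ (by omega) (by exact_mod_cast Nat.succ_le_of_lt j.isLt)]
  omega

/-- out-of-band entries of `Gmat` vanish. -/
lemma Gmat_out_of_band {R : Type*} [CommRing R] (k n : ℕ) [NeZero n] (hkn : k < n)
    (X : Matrix (Fin (n - k)) (Fin n) R) (i : Fin (n - k)) (j : Fin n)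
    (h : (j : ℕ) < (i : ℕ) ∨ (i : ℕ) + k < (j : ℕ)) :
    Gmat k n X i j = 0 := by
  rw [Gmat_apply, pluecker, dif_neg]
  rw [Finset.image_union, Finset.image_singleton, colIdx_fin,
    Finset.union_comm, ← Finset.insert_eq,
    Finset.insert_eq_self.2 ((mem_image_Tset k n hkn i j).2 h),
    card_image_Tset k n hkn]
  omega

lemma card_image_union (k n : ℕ) [NeZero n] (hkn : k < n) (i : Fin (n - k)) (j : Fin n)
    (h1 : (i : ℕ) ≤ (j : ℕ)) (h2 : (j : ℕ) ≤ (i : ℕ) + k) :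
    ((Tset k n i ∪ {((j : ℕ) : ℤ) + 1}).image (colIdx n)).card = n - k := by
  rw [Finset.image_union, Finset.image_singleton, colIdx_fin,
    Finset.union_comm, ← Finset.insert_eq,
    Finset.card_insert_of_notMem (by rw [mem_image_Tset k n hkn]; omega),
    card_image_Tset k n hkn]
  have := i.isLt
  omega

lemma gCol_strictMono (k n : ℕ) (i : Fin (n - k)) (j : Fin n)
    (h1 : (i : ℕ) ≤ (j : ℕ)) (h2 : (j : ℕ) ≤ (i : ℕ) + k) :
    StrictMono (gCol k n i j) := by
  intro s t hst
  have hs := s.isLt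
  have ht := t.isLt
  rw [Fin.lt_def] at hst ⊢
  simp only [gCol_val]
  have hj := j.isLt
  split_ifs <;> omega

lemma gCol_mem (k n : ℕ) [NeZero n] (hkn : k < n) (i : Fin (n - k)) (j : Fin n)
    (h1 : (i : ℕ) ≤ (j : ℕ)) (h2 : (j : ℕ) ≤ (i : ℕ) + k) (t : Fin (n - k)) :
    gCol k n i j t ∈ (Tset k n i ∪ {((j : ℕ) : ℤ) + 1}).image (colIdx n) := by
  have ht := t.isLt
  rw [Finset.image_union, Finset.image_singleton, colIdx_fin, Finset.mem_union]
  by_cases ha : (t : ℕ) < (i : ℕ)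
  · left; rw [mem_image_Tset k n hkn]
    have hv : (gCol k n i j t : ℕ) = (t : ℕ) := by rw [gCol_val, if_pos ha]
    omega
  · by_cases hb : (t : ℕ) = (i : ℕ)
    · right
      have hv : gCol k n i j t = j := by
        apply Fin.ext; rw [gCol_val, if_neg ha, if_pos hb]
      rw [hv]; exact Finset.mem_singleton_self _
    · left; rw [mem_image_Tset k n hkn]
      have hv : (gCol k n i j t : ℕ) = (t : ℕ) + k := by
        rw [gCol_val, if_neg ha, if_neg hb]
      omega

/-- in-band: `Gmat` entry as an honest determinant on the explicit sorted columns. -/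
lemma Gmat_in_band {R : Type*} [CommRing R] (k n : ℕ) [NeZero n] (hkn : k < n)
    (X : Matrix (Fin (n - k)) (Fin n) R) (i : Fin (n - k)) (j : Fin n)
    (h1 : (i : ℕ) ≤ (j : ℕ)) (h2 : (j : ℕ) ≤ (i : ℕ) + k) :
    Gmat k n X i j = (X.submatrix id (gCol k n i j)).det := by
  rw [Gmat_apply, pluecker, dif_pos (card_image_union k n hkn i j h1 h2)]
  congr 1
  rw [← Finset.orderEmbOfFin_unique (card_image_union k n hkn i j h1 h2)
    (gCol_mem k n hkn i j h1 h2) (gCol_strictMono k n i j h1 h2)]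

/-- for ALL `j`, `Gmat i j` is the determinant on columns `gCol`. -/
lemma Gmat_eq_det {R : Type*} [CommRing R] (k n : ℕ) [NeZero n] (hkn : k < n)
    (X : Matrix (Fin (n - k)) (Fin n) R) (i : Fin (n - k)) (j : Fin n) :
    Gmat k n X i j = (X.submatrix id (gCol k n i j)).det := by
  by_cases h1 : (i : ℕ) ≤ (j : ℕ) ∧ (j : ℕ) ≤ (i : ℕ) + k
  · exact Gmat_in_band k n hkn X i j h1.1 h1.2
  · push_neg at h1
    have hband : (j : ℕ) < (i : ℕ) ∨ (i : ℕ) + k < (j : ℕ) := by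
      rcases Nat.lt_or_ge (j : ℕ) (i : ℕ) with h | h
      · exact Or.inl h
      · exact Or.inr (h1 h)
    rw [Gmat_out_of_band k n hkn X i j hband]
    -- the columns are repeated, determinant is 0
    have hii := i.isLt
    have hjj := j.isLt
    rcases hband with h | h
    · refine (Matrix.det_zero_of_column_eq (i := (⟨(j : ℕ), by omega⟩ : Fin (n - k)))
        (j := (⟨(i : ℕ), by omega⟩ : Fin (n - k))) ?_ fun r => ?_).symm
      · intro hcon
        rw [Fin.mk.injEq] at hcon
        omega
      · simp only [Matrix.submatrix_apply, id]
        congr 1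
        apply Fin.ext
        simp only [gCol_val, Fin.val_mk]
        split_ifs <;> omega
    · refine (Matrix.det_zero_of_column_eq (i := (⟨(j : ℕ) - k, by omega⟩ : Fin (n - k)))
        (j := (⟨(i : ℕ), by omega⟩ : Fin (n - k))) ?_ fun r => ?_).symm
      · intro hcon
        rw [Fin.mk.injEq] at hcon
        omega
      · simp only [Matrix.submatrix_apply, id]
        congr 1
        apply Fin.ext
        simp only [gCol_val, Fin.val_mk]
        split_ifs <;> omega

/-- Laplace expansion along a column, abstract form. -/
lemma det_expand {R : Type*} [CommRing R] {m N : ℕ} (Y : Matrix (Fin (m + 1)) (Fin N) R)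
    (f : Fin (m + 1) → Fin N) (τ : Fin m → Fin N) (i : Fin (m + 1)) (c : Fin N)
    (hfi : f i = c) (hfo : ∀ t, f (i.succAbove t) = τ t) :
    (Y.submatrix id f).det
      = ∑ r : Fin (m + 1),
          (-1) ^ ((r : ℕ) + (i : ℕ)) * Y r c * (Y.submatrix (fun a => r.succAbove a) τ).det := by
  rw [Matrix.det_succ_column _ i]
  refine Finset.sum_congr rfl fun r _ => ?_
  congr 1
  · rw [Matrix.submatrix_apply, hfi]
    rfl
  · congr 1
    ext a b
    simp only [Matrix.submatrix_apply, Matrix.submatrix_submatrix, Function.comp, id]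
    rw [hfo]

lemma val_succAbove {m : ℕ} (i : Fin (m + 1)) (t : Fin m) :
    ((i.succAbove t : Fin (m + 1)) : ℕ) = if (t : ℕ) < (i : ℕ) then (t : ℕ) else (t : ℕ) + 1 := by
  rw [Fin.succAbove]
  split_ifs with h1 h2 h2
  · rfl
  · exact absurd (by simpa [Fin.lt_def] using h1) h2
  · exact absurd (by simpa [Fin.lt_def] using h2) h1
  · rfl

/-- Main structural identity: `G(X) = C(X) · X`. -/
lemma Gmat_eq_mul {R : Type*} [CommRing R] (k n : ℕ) [NeZero n] (hkn : k < n)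
    (X : Matrix (Fin (n - k)) (Fin n) R) :
    Gmat k n X = Cmat k n X * X := by
  have hm : n - k = (n - k - 1) + 1 := by omega
  ext i j
  rw [Gmat_eq_det k n hkn X i j]
  set e : Fin (n - k) ≃ Fin ((n - k - 1) + 1) := finCongr hm with he
  have hvale : ∀ x : Fin (n - k), ((e x : Fin ((n-k-1)+1)) : ℕ) = (x : ℕ) := fun x => rfl
  have hvales : ∀ x : Fin ((n-k-1)+1), ((e.symm x : Fin (n-k)) : ℕ) = (x : ℕ) := fun x => rfl
  have key := det_expand (X.submatrix (⇑e.symm) id) (fun t => gCol k n i j (e.symm t))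
    (sigmaCol k n i) (e i) j ?_ ?_
  · have hL : ((X.submatrix (⇑e.symm) id).submatrix id
        (fun t => gCol k n i j (e.symm t))).det = (X.submatrix id (gCol k n i j)).det := by
      rw [show (X.submatrix (⇑e.symm) id).submatrix id (fun t => gCol k n i j (e.symm t))
          = (X.submatrix id (gCol k n i j)).submatrix (⇑e.symm) (⇑e.symm) by
        ext a b; simp [Matrix.submatrix_apply]]
      rw [Matrix.det_submatrix_equiv_self]
    rw [hL] at key
    rw [key, Matrix.mul_apply]
    rw [← Equiv.sum_comp e (fun r => _)]  -- reindex
    refine Finset.sum_congr rfl fun r _ => ?_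
    simp only [Matrix.submatrix_apply, id]
    have hrow : (X.submatrix (⇑e.symm) id).submatrix (fun a => (e r).succAbove a)
        (sigmaCol k n i) = X.submatrix (rowDel k n r) (sigmaCol k n i) := by
      ext a b
      simp only [Matrix.submatrix_apply, id]
      congr 1
      apply Fin.ext
      rw [hvales, val_succAbove]
      simp only [rowDel, hvale]
      split_ifs <;> rfl
    rw [hrow, Equiv.symm_apply_apply]
    simp only [Cmat, Matrix.of_apply, hvale]
    ring
  · -- f (e i) = j
    show gCol k n i j (e.symm (e i)) = j
    rw [Equiv.symm_apply_apply]
    apply Fin.ext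
    rw [gCol_val, if_neg (by omega), if_pos rfl]
  · -- f ((e i).succAbove t) = sigmaCol i t
    intro t
    have ht := t.isLt
    apply Fin.ext
    have hv : ((e.symm ((e i).succAbove t) : Fin (n - k)) : ℕ)
        = if (t : ℕ) < (i : ℕ) then (t : ℕ) else (t : ℕ) + 1 := by
      rw [hvales, val_succAbove, hvale]
    show (gCol k n i j (e.symm ((e i).succAbove t)) : ℕ) = (sigmaCol k n i t : ℕ)
    rw [gCol_val, sigmaCol_val, hv]
    have hi := i.isLt
    split_ifs <;> omega

/-- Step B: multiplicativity of maximal minors. -/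
lemma pluecker_mul {R : Type*} [CommRing R] (k n : ℕ) [NeZero n]
    (C : Matrix (Fin (n - k)) (Fin (n - k)) R) (X : Matrix (Fin (n - k)) (Fin n) R)
    (S : Finset ℤ) :
    pluecker k n (C * X) S = C.det * pluecker k n X S := by
  unfold pluecker
  split_ifs with h
  · have hsub : (C * X).submatrix id ⇑((Finset.image (colIdx n) S).orderEmbOfFin h)
        = C * X.submatrix id ⇑((Finset.image (colIdx n) S).orderEmbOfFin h) := by
      ext r t
      simp [Matrix.mul_apply]
    rw [hsub, Matrix.det_mul]
  · rw [mul_zero]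

lemma pluecker_congr {R : Type*} [CommRing R] (k n : ℕ) [NeZero n]
    (X : Matrix (Fin (n - k)) (Fin n) R) {S S' : Finset ℤ}
    (h : S.image (colIdx n) = S'.image (colIdx n)) :
    pluecker k n X S = pluecker k n X S' := by
  simp only [pluecker, h]

/-- the identity-like column inclusion. -/
def castCol (k n : ℕ) : Fin (n - k) → Fin n :=
  fun t => ⟨(t : ℕ), by have := t.isLt; omega⟩

lemma colIdx_natCast (n : ℕ) [NeZero n] (a : ℕ) (h1 : 1 ≤ a) (h2 : a ≤ n) :
    colIdx n (a : ℤ) = ⟨a - 1, by omega⟩ := by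
  apply Fin.ext
  rw [colIdx_val n _ (by exact_mod_cast h1) (by exact_mod_cast h2)]
  simp only [Fin.val_mk]
  omega

lemma image_S1 (k n : ℕ) [NeZero n] (hkn : k < n) :
    ((Finset.Icc (1 : ℤ) ((n - k : ℕ) : ℤ)).image (colIdx n))
      = Finset.image (castCol k n) Finset.univ := by
  ext x
  constructor
  · intro hx
    obtain ⟨a, ha, rfl⟩ := Finset.mem_image.1 hx
    rw [Finset.mem_Icc] at ha
    have ha1 : 1 ≤ a.toNat := by omega
    have ha2 : a.toNat ≤ n - k := by omega
    have hae : a = (a.toNat : ℤ) := by omega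
    rw [hae, colIdx_natCast n a.toNat ha1 (by omega)]
    refine Finset.mem_image.2 ⟨⟨a.toNat - 1, by omega⟩, Finset.mem_univ _, ?_⟩
    apply Fin.ext
    rfl
  · intro hx
    obtain ⟨t, _, rfl⟩ := Finset.mem_image.1 hx
    have ht := t.isLt
    refine Finset.mem_image.2 ⟨((t : ℕ) : ℤ) + 1, Finset.mem_Icc.2 ⟨by omega, by omega⟩, ?_⟩
    apply Fin.ext
    rw [colIdx_val n _ (by omega) (by omega)]
    simp only [castCol, Fin.val_mk]
    omega

lemma card_image_S1 (k n : ℕ) [NeZero n] (hkn : k < n) :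
    ((Finset.Icc (1 : ℤ) ((n - k : ℕ) : ℤ)).image (colIdx n)).card = n - k := by
  rw [image_S1 k n hkn, Finset.card_image_of_injective]
  · simp
  · intro a b hab
    have h2 := congrArg Fin.val hab
    exact Fin.ext h2

lemma castCol_strictMono (k n : ℕ) : StrictMono (castCol k n) := by
  intro s t hst
  rw [Fin.lt_def] at hst ⊢
  exact hst

lemma pluecker_S1 {R : Type*} [CommRing R] (k n : ℕ) [NeZero n] (hkn : k < n)
    (X : Matrix (Fin (n - k)) (Fin n) R) :
    pluecker k n X (Finset.Icc (1 : ℤ) ((n - k : ℕ) : ℤ))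
      = (X.submatrix id (castCol k n)).det := by
  rw [pluecker, dif_pos (card_image_S1 k n hkn)]
  congr 1
  rw [← Finset.orderEmbOfFin_unique (card_image_S1 k n hkn)
    (fun t => by rw [image_S1 k n hkn]; exact Finset.mem_image_of_mem _ (Finset.mem_univ t))
    (castCol_strictMono k n)]

/-- Step C: the triangular computation. -/
lemma pluecker_Gmat_S1 {R : Type*} [CommRing R] (k n : ℕ) [NeZero n] (hkn : k < n)
    (X : Matrix (Fin (n - k)) (Fin n) R) :
    pluecker k n (Gmat k n X) (Finset.Icc (1 : ℤ) ((n - k : ℕ) : ℤ))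
      = ∏ i : Fin (n - k),
          pluecker k n X
            (Finset.Icc (((i : ℕ) : ℤ) + 1 + k + 1) ((n : ℤ) + (((i : ℕ) : ℤ) + 1))) := by
  rw [pluecker_S1 k n hkn]
  rw [Matrix.det_of_upperTriangular (by
    intro a b hba
    simp only [Matrix.submatrix_apply, id]
    exact Gmat_out_of_band k n hkn X a (castCol k n b) (Or.inl hba))]
  refine Finset.prod_congr rfl fun i _ => ?_
  simp only [Matrix.submatrix_apply, id]
  rw [Gmat_apply]
  refine (pluecker_congr k n X ?_).symm
  have hsplit : Finset.Icc (((i : ℕ) : ℤ) + 1 + k + 1) ((n : ℤ) + (((i : ℕ) : ℤ) + 1))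
      = Tset k n i ∪ {(n : ℤ) + (((i : ℕ) : ℤ) + 1)} := by
    ext a
    simp only [Tset, Finset.mem_Icc, Finset.mem_union, Finset.mem_singleton]
    omega
  have hc : ((castCol k n i : ℕ) : ℤ) = ((i : ℕ) : ℤ) := rfl
  rw [hsplit, Finset.image_union, Finset.image_union, Finset.image_singleton,
    Finset.image_singleton, hc,
    show (n : ℤ) + (((i : ℕ) : ℤ) + 1) = (n : ℤ) + (((i : ℕ) : ℤ) + 1) from rfl,
    colIdx_add_n n (((i : ℕ) : ℤ) + 1)]

/-- product conversion. -/
lemma prod_conv {R : Type*} [CommRing R] (k n : ℕ) [NeZero n] (hkn : k < n)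
    (X : Matrix (Fin (n - k)) (Fin n) R) :
    (∏ i : Fin (n - k),
        pluecker k n X
          (Finset.Icc (((i : ℕ) : ℤ) + 1 + k + 1) ((n : ℤ) + (((i : ℕ) : ℤ) + 1))))
      = (∏ a ∈ Finset.Icc 1 (n - k - 1),
          pluecker k n X (Finset.Icc ((a : ℤ) + k + 1) ((n : ℤ) + a)))
        * pluecker k n X (Finset.Icc (1 : ℤ) ((n - k : ℕ) : ℤ)) := by
  set f : ℕ → R := fun a => pluecker k n X (Finset.Icc ((a : ℤ) + k + 1) ((n : ℤ) + a)) with hf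
  have hstep : ∀ i : Fin (n - k),
      pluecker k n X
        (Finset.Icc (((i : ℕ) : ℤ) + 1 + k + 1) ((n : ℤ) + (((i : ℕ) : ℤ) + 1)))
      = f ((i : ℕ) + 1) := by
    intro i
    rw [hf]
    congr 2 <;> push_cast <;> ring
  rw [Finset.prod_congr rfl fun i _ => hstep i]
  rw [Fin.prod_univ_eq_prod_range (fun a => f (a + 1)) (n - k)]
  have hsplit : Finset.Icc 1 (n - k) = insert (n - k) (Finset.Icc 1 (n - k - 1)) := by
    ext a
    simp only [Finset.mem_Icc, Finset.mem_insert]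
    omega
  have hIcc : ∏ a ∈ Finset.Icc 1 (n - k), f a = ∏ a ∈ Finset.range (n - k), f (a + 1) := by
    rw [← Finset.Ico_add_one_right_eq_Icc, Finset.prod_Ico_eq_prod_range]
    refine Finset.prod_congr (by norm_num) fun a _ => by rw [Nat.add_comm]
  have hlast : f (n - k) = pluecker k n X (Finset.Icc (1 : ℤ) ((n - k : ℕ) : ℤ)) := by
    rw [hf]
    refine pluecker_congr k n X ?_
    have him : Finset.Icc (((n - k : ℕ) : ℤ) + k + 1) ((n : ℤ) + ((n - k : ℕ) : ℤ))
        = (Finset.Icc (1 : ℤ) ((n - k : ℕ) : ℤ)).image (fun a => (n : ℤ) + a) := by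
      rw [show (fun a => (n : ℤ) + a) = ((n : ℤ) + ·) from rfl, Finset.image_add_left_Icc]
      congr 1
      omega
    rw [him, Finset.image_image]
    refine Finset.image_congr fun a _ => ?_
    exact colIdx_add_n n a
  rw [← hIcc, hsplit, Finset.prod_insert (by simp; omega), hlast, mul_comm]

/-- `pluecker` commutes with ring homomorphisms. -/
lemma pluecker_map {R S' : Type*} [CommRing R] [CommRing S'] (k n : ℕ) [NeZero n]
    (φ : R →+* S') (X : Matrix (Fin (n - k)) (Fin n) R) (S : Finset ℤ) :
    pluecker k n (X.map φ) S = φ (pluecker k n X S) := by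
  unfold pluecker
  split_ifs with h
  · have hsub : (X.map ⇑φ).submatrix id ⇑((Finset.image (colIdx n) S).orderEmbOfFin h)
        = (X.submatrix id ⇑((Finset.image (colIdx n) S).orderEmbOfFin h)).map ⇑φ := by
      ext r t
      simp
    rw [hsub, RingHom.map_det, RingHom.mapMatrix_apply]
  · rw [map_zero]

lemma Cmat_map {R S' : Type*} [CommRing R] [CommRing S'] (k n : ℕ) [NeZero n]
    (φ : R →+* S') (X : Matrix (Fin (n - k)) (Fin n) R) :
    Cmat k n (X.map φ) = (Cmat k n X).map φ := by
  ext i r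
  simp only [Cmat, Matrix.of_apply, Matrix.map_apply]
  rw [show (X.map φ).submatrix (rowDel k n r) (sigmaCol k n i)
      = (X.submatrix (rowDel k n r) (sigmaCol k n i)).map φ from by
    ext a b; simp [Matrix.submatrix_apply, Matrix.map_apply]]
  rw [map_mul, map_pow, map_neg, map_one, RingHom.map_det, RingHom.mapMatrix_apply]

/-- The determinant of the cofactor matrix is the expected monomial. -/
lemma detC_eq_P {R : Type*} [CommRing R] (k n : ℕ) [NeZero n] (hkn : k < n)
    (X : Matrix (Fin (n - k)) (Fin n) R) :
    (Cmat k n X).det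
      = ∏ a ∈ Finset.Icc 1 (n - k - 1),
          pluecker k n X (Finset.Icc ((a : ℤ) + k + 1) ((n : ℤ) + a)) := by
  -- generic case
  set X₀ : Matrix (Fin (n - k)) (Fin n) (MvPolynomial (Fin (n - k) × Fin n) ℤ) :=
    Matrix.of fun r c => MvPolynomial.X (r, c) with hX₀
  have hne : pluecker k n X₀ (Finset.Icc (1 : ℤ) ((n - k : ℕ) : ℤ)) ≠ 0 := by
    intro h0
    have h1 := congrArg (MvPolynomial.eval
      (fun p : Fin (n - k) × Fin n => if (p.1 : ℕ) = (p.2 : ℕ) then (1 : ℤ) else 0)) h0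
    rw [map_zero] at h1
    rw [pluecker_S1 k n hkn, RingHom.map_det, RingHom.mapMatrix_apply] at h1
    have h2 : (X₀.submatrix id (castCol k n)).map (MvPolynomial.eval
        (fun p : Fin (n - k) × Fin n => if (p.1 : ℕ) = (p.2 : ℕ) then (1 : ℤ) else 0))
        = (1 : Matrix (Fin (n - k)) (Fin (n - k)) ℤ) := by
      ext r t
      simp only [Matrix.map_apply, Matrix.submatrix_apply, id, hX₀, Matrix.of_apply,
        MvPolynomial.eval_X, Matrix.one_apply]
      have hcast : ((castCol k n t : Fin n) : ℕ) = (t : ℕ) := rfl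
      rw [hcast]
      by_cases h : r = t
      · rw [if_pos (by rw [h]), if_pos h]
      · rw [if_neg (fun hc => h (Fin.ext hc)), if_neg h]
    rw [h2, Matrix.det_one] at h1
    exact one_ne_zero h1
  have hgen : (Cmat k n X₀).det
      = ∏ a ∈ Finset.Icc 1 (n - k - 1),
          pluecker k n X₀ (Finset.Icc ((a : ℤ) + k + 1) ((n : ℤ) + a)) := by
    apply mul_right_cancel₀ hne
    rw [← pluecker_mul, ← Gmat_eq_mul k n hkn, pluecker_Gmat_S1 k n hkn,
      prod_conv k n hkn]
  -- specialize
  set φ : MvPolynomial (Fin (n - k) × Fin n) ℤ →+* R :=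
    (MvPolynomial.eval₂Hom (Int.castRingHom R) (fun p : Fin (n - k) × Fin n => X p.1 p.2))
    with hφ
  have hXmap : X₀.map φ = X := by
    ext r c
    simp only [Matrix.map_apply, hX₀, Matrix.of_apply, hφ, MvPolynomial.eval₂Hom_X']
  calc (Cmat k n X).det = ((Cmat k n X₀).map φ).det := by rw [← Cmat_map, hXmap]
    _ = φ ((Cmat k n X₀).det) := by rw [RingHom.map_det, RingHom.mapMatrix_apply]
    _ = ∏ a ∈ Finset.Icc 1 (n - k - 1),
          pluecker k n X (Finset.Icc ((a : ℤ) + k + 1) ((n : ℤ) + a)) := by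
        rw [hgen, map_prod]
        refine Finset.prod_congr rfl fun a _ => ?_
        rw [← pluecker_map, hXmap]

end GmatAux

theorem maximal_minors_of_Gmat {R : Type*} [CommRing R] (k n : ℕ) [NeZero n]
    (hk : 0 < k) (hkn : k < n)
    (X : Matrix (Fin (n - k)) (Fin n) R)
    (S : Finset ℤ) (hS : S ⊆ Finset.Icc (1 : ℤ) (n : ℤ)) (hScard : S.card = n - k) :
    pluecker k n (Gmat k n X) S
      = (∏ i ∈ Finset.Icc 1 (n - k - 1),
          pluecker k n X (Finset.Icc ((i : ℤ) + k + 1) ((n : ℤ) + i)))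
        * pluecker k n X S := by
  rw [GmatAux.Gmat_eq_mul k n hkn, GmatAux.pluecker_mul, GmatAux.detC_eq_P k n hkn]
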